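/- Equivalence of the proposed estimator with least squares on the predicted factors (Section 5 of the paper). Let n, p, K ≥ 1, let X be an n×p real matrix, y ∈ ℝ^n, and Θ̂ ∈ ℝ^{p×K} such that Θ̂ᵀ Θ̂ and Θ̂ᵀ Xᵀ X Θ̂ are both invertible. Set Σ̂ = n^{-1} Xᵀ X and Ẑ = X Θ̂ (Θ̂ᵀ Σ̂ Θ̂)^{-1} Θ̂ᵀ Θ̂. Then Ẑᵀ Ẑ is invertible and (Ẑᵀ Ẑ)^{-1} Ẑᵀ y = (Θ̂ᵀ Θ̂)^{-1} Θ̂ᵀ ( n^{-1} Xᵀ y ). -/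

import Mathlib

open Matrix

noncomputable section

/-- The predicted factors `Ẑ = X Θ̂ (Θ̂ᵀ Σ̂ Θ̂)⁻¹ Θ̂ᵀ Θ̂` with `Σ̂ = n⁻¹ Xᵀ X`. -/
def Zhat {n p K : ℕ} (X : Matrix (Fin n) (Fin p) ℝ) (Th : Matrix (Fin p) (Fin K) ℝ) :
    Matrix (Fin n) (Fin K) ℝ :=
  X * Th * (Thᵀ * ((n : ℝ)⁻¹ • (Xᵀ * X)) * Th)⁻¹ * (Thᵀ * Th)

/-- Section 5: the proposed estimator coincides with the ordinary least squares
estimator obtained by regressing `y` on the predicted factors `Ẑ`: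
`(ẐᵀẐ)⁻¹ Ẑᵀ y = (Θ̂ᵀΘ̂)⁻¹ Θ̂ᵀ (n⁻¹ Xᵀ y)`. -/
theorem estimator_is_ols_on_predicted_factors {n p K : ℕ} (hn : 1 ≤ n)
    (X : Matrix (Fin n) (Fin p) ℝ) (y : Fin n → ℝ)
    (Th : Matrix (Fin p) (Fin K) ℝ)
    (h1 : IsUnit (Thᵀ * Th)) (h2 : IsUnit (Thᵀ * (Xᵀ * X) * Th)) :
    IsUnit ((Zhat X Th)ᵀ * Zhat X Th) ∧
    ((Zhat X Th)ᵀ * Zhat X Th)⁻¹.mulVec ((Zhat X Th)ᵀ.mulVec y)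
      = (Thᵀ * Th)⁻¹.mulVec (Thᵀ.mulVec ((n : ℝ)⁻¹ • Xᵀ.mulVec y)) := by
  have hn0 : (n : ℝ) ≠ 0 := Nat.cast_ne_zero.mpr (by omega)
  set A := Thᵀ * Th with hA
  set B := Thᵀ * (Xᵀ * X) * Th with hB
  have hAd : IsUnit A.det := (Matrix.isUnit_iff_isUnit_det A).mp h1
  have hBd : IsUnit B.det := (Matrix.isUnit_iff_isUnit_det B).mp h2
  have hBinv : B⁻¹ * B = 1 := Matrix.nonsing_inv_mul B hBd
  have hBinv' : B * B⁻¹ = 1 := Matrix.mul_nonsing_inv B hBd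
  have hAinv : A⁻¹ * A = 1 := Matrix.nonsing_inv_mul A hAd
  have hAinv' : A * A⁻¹ = 1 := Matrix.mul_nonsing_inv A hAd
  have hmid : Thᵀ * ((n : ℝ)⁻¹ • (Xᵀ * X)) * Th = (n : ℝ)⁻¹ • B := by
    rw [hB]; simp [Matrix.mul_smul, Matrix.smul_mul]
  have hmidinv : ((n : ℝ)⁻¹ • B)⁻¹ = (n : ℝ) • B⁻¹ := by
    apply Matrix.inv_eq_right_inv
    rw [Matrix.smul_mul, Matrix.mul_smul, smul_smul, inv_mul_cancel₀ hn0, one_smul, hBinv']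
  have hZ : Zhat X Th = (n : ℝ) • (X * Th * B⁻¹ * A) := by
    rw [Zhat, hmid, hmidinv]
    simp only [Matrix.mul_smul, Matrix.smul_mul, ← hA]
  have hAt : Aᵀ = A := by rw [hA]; simp
  have hBt : B⁻¹ᵀ = B⁻¹ := by
    rw [Matrix.transpose_nonsing_inv]
    congr 1
    rw [hB]; simp [Matrix.transpose_mul, Matrix.mul_assoc]
  have hZTZ : (Zhat X Th)ᵀ * Zhat X Th = ((n : ℝ) ^ 2) • (A * B⁻¹ * A) := by
    rw [hZ]
    simp only [Matrix.transpose_smul, Matrix.transpose_mul, hAt, hBt, Matrix.smul_mul,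
      Matrix.mul_smul, smul_smul]
    rw [show (n : ℝ) * (n : ℝ) = (n : ℝ) ^ 2 by ring]
    congr 1
    simp only [Matrix.mul_assoc]
    rw [show Thᵀ * (Xᵀ * (X * (Th * (B⁻¹ * A)))) = B * (B⁻¹ * A) by
      rw [hB]; simp only [Matrix.mul_assoc]]
    rw [← Matrix.mul_assoc B, hBinv', Matrix.one_mul]
  have hD : (((n : ℝ) ^ 2) • (A * B⁻¹ * A)) * (((n : ℝ) ^ 2)⁻¹ • (A⁻¹ * B * A⁻¹)) = 1 := by
    rw [Matrix.smul_mul, Matrix.mul_smul, smul_smul, mul_inv_cancel₀ (pow_ne_zero 2 hn0)]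
    rw [one_smul]
    calc A * B⁻¹ * A * (A⁻¹ * B * A⁻¹)
        = A * B⁻¹ * (A * A⁻¹) * B * A⁻¹ := by simp only [Matrix.mul_assoc]
      _ = 1 := by rw [hAinv', Matrix.mul_one, Matrix.mul_assoc A, hBinv, Matrix.mul_one, hAinv']
  have hunit : IsUnit ((Zhat X Th)ᵀ * Zhat X Th) := by
    rw [hZTZ]; exact (Matrix.isUnit_iff_isUnit_det _).mpr (Matrix.isUnit_det_of_right_inverse hD)
  refine ⟨hunit, ?_⟩
  have hZTZinv : ((Zhat X Th)ᵀ * Zhat X Th)⁻¹ = ((n : ℝ) ^ 2)⁻¹ • (A⁻¹ * B * A⁻¹) := by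
    rw [hZTZ]; exact Matrix.inv_eq_right_inv hD
  have hkey : ((Zhat X Th)ᵀ * Zhat X Th)⁻¹ * (Zhat X Th)ᵀ
      = (n : ℝ)⁻¹ • (A⁻¹ * (Thᵀ * Xᵀ)) := by
    rw [hZTZinv, hZ]
    simp only [Matrix.transpose_smul, Matrix.transpose_mul, hAt, hBt, Matrix.smul_mul,
      Matrix.mul_smul, smul_smul]
    rw [show (n : ℝ) * ((n : ℝ) ^ 2)⁻¹ = (n : ℝ)⁻¹ by field_simp]
    congr 1
    calc A⁻¹ * B * A⁻¹ * (A * (B⁻¹ * (Thᵀ * Xᵀ)))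
        = A⁻¹ * B * (A⁻¹ * A) * (B⁻¹ * (Thᵀ * Xᵀ)) := by simp only [Matrix.mul_assoc]
      _ = A⁻¹ * (Thᵀ * Xᵀ) := by
          rw [hAinv, Matrix.mul_one, Matrix.mul_assoc A⁻¹ B, ← Matrix.mul_assoc B, hBinv',
            Matrix.one_mul]
  rw [Matrix.mulVec_mulVec, hkey, ← Matrix.smul_mulVec, Matrix.mulVec_mulVec,
    Matrix.mulVec_mulVec]
  simp [Matrix.mul_smul, Matrix.mul_assoc]
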